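/- arXiv:1509.07927 — 2 statements merged into one kernel-verified Lean document; each statement's English description precedes it below -/
import Mathlib

section
/- Let θ ∈ ℝ^N, let θ̂ be a random vector on a probability space (Ω, μ), and let a > 0, m ≥ 1, N ≥ 1, C ⊆ ℝ^N and h > 0 be such that for every η > 0, μ( ∃ x ∈ C with |⟨θ̂, x⟩ − ⟨θ, x⟩| > η ) ≤ 2 N exp( − a m η² / h² ). Let E ⊆ C be a finite set, x* ∈ E, and Δ > 0 satisfy ⟨θ, x*⟩ − ⟨θ, y⟩ ≥ Δ for all y ∈ E with y ≠ x*. Then μ( ∃ y ∈ E, y ≠ x*, with ⟨θ̂, y⟩ ≥ ⟨θ̂, x*⟩ ) ≤ 2 N exp( − a m Δ² / (4 h²) ). -/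
open MeasureTheory Real

/-- Lemma 2(c): the probability that the greedy arm computed
from the estimate `θ̂` differs from the true optimal arm `x*` (i.e. some other
extremal point `y` has estimated reward at least that of `x*`) is at most
`2 N exp(−a m Δ² / (4 h²))`. -/
theorem greedy_error_probability_bound
    {Ω : Type*} [MeasurableSpace Ω] (μ : Measure Ω) [IsProbabilityMeasure μ]
    (N : ℕ) (hN : 1 ≤ N) (θ : Fin N → ℝ) (θhat : Ω → Fin N → ℝ)
    (a : ℝ) (ha : 0 < a) (m : ℕ) (hm : 1 ≤ m)
    (C : Set (Fin N → ℝ)) (h : ℝ) (hh : 0 < h)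
    (htail : ∀ η : ℝ, 0 < η →
      μ {ω | ∃ x ∈ C, η < |(∑ i, θhat ω i * x i) - ∑ i, θ i * x i|} ≤
        ENNReal.ofReal (2 * N * Real.exp (-(a * m * η ^ 2) / h ^ 2)))
    (E : Finset (Fin N → ℝ)) (hE : ∀ y ∈ E, y ∈ C)
    (xstar : Fin N → ℝ) (hx : xstar ∈ E) (Δ : ℝ) (hΔ : 0 < Δ)
    (hgap : ∀ y ∈ E, y ≠ xstar → Δ ≤ (∑ i, θ i * xstar i) - ∑ i, θ i * y i) :
    μ {ω | ∃ y ∈ E, y ≠ xstar ∧ (∑ i, θhat ω i * xstar i) ≤ ∑ i, θhat ω i * y i} ≤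
      ENNReal.ofReal (2 * N * Real.exp (-(a * m * Δ ^ 2) / (4 * h ^ 2))) := by
  set S := {ω | ∃ y ∈ E, y ≠ xstar ∧ (∑ i, θhat ω i * xstar i) ≤ ∑ i, θhat ω i * y i} with hS
  -- Step 1: for each 0 < η < Δ/2, μ S ≤ ofReal (2N exp(-(a m η²)/h²))
  have key : ∀ η : ℝ, 0 < η → η < Δ / 2 →
      μ S ≤ ENNReal.ofReal (2 * N * Real.exp (-(a * m * η ^ 2) / h ^ 2)) := by
    intro η hη hηΔ
    refine le_trans (measure_mono ?_) (htail η hη)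
    intro ω hω
    obtain ⟨y, hyE, hyne, hle⟩ := hω
    by_contra hcon
    simp only [Set.mem_setOf_eq] at hcon
    push_neg at hcon
    have h1 : |(∑ i, θhat ω i * xstar i) - ∑ i, θ i * xstar i| ≤ η :=
      hcon xstar (hE _ hx)
    have h2 : |(∑ i, θhat ω i * y i) - ∑ i, θ i * y i| ≤ η := hcon y (hE _ hyE)
    have hg := hgap y hyE hyne
    have e1 := abs_le.mp h1
    have e2 := abs_le.mp h2
    linarith [e1.1, e1.2, e2.1, e2.2]
  -- Step 2: pass to the limit η → Δ/2⁻
  have hne : (Filter.NeBot (nhdsWithin (Δ/2) (Set.Iio (Δ/2)))) := by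
    exact nhdsLT_neBot (Δ/2)
  have hcont : Filter.Tendsto
      (fun η : ℝ => ENNReal.ofReal (2 * N * Real.exp (-(a * m * η ^ 2) / h ^ 2)))
      (nhdsWithin (Δ/2) (Set.Iio (Δ/2)))
      (nhds (ENNReal.ofReal (2 * N * Real.exp (-(a * m * (Δ/2) ^ 2) / h ^ 2)))) := by
    apply Filter.Tendsto.mono_left ?_ nhdsWithin_le_nhds
    exact (ENNReal.continuous_ofReal.comp (by continuity)).continuousAt
  have hbound : μ S ≤ ENNReal.ofReal (2 * N * Real.exp (-(a * m * (Δ/2) ^ 2) / h ^ 2)) := by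
    refine ge_of_tendsto hcont ?_
    filter_upwards [Ioo_mem_nhdsLT_of_mem
      (show Δ/2 ∈ Set.Ioc (Δ/4) (Δ/2) by constructor <;> linarith)] with η hη
    exact key η (by linarith [hη.1, hΔ]) hη.2
  convert hbound using 4
  ring
end

section
/- Let C ⊆ ℝ^N be a nonempty compact convex set whose set E of extreme points is finite. Let θ, θ̂ ∈ ℝ^N, x* ∈ E, and Δ > 0 be such that ⟨θ, x*⟩ − ⟨θ, y⟩ ≥ Δ for every y ∈ E with y ≠ x*. If |⟨θ̂, x⟩ − ⟨θ, x⟩| < Δ/2 for every x ∈ E, then ⟨θ̂, y⟩ ≤ ⟨θ̂, x*⟩ for every y ∈ C; that is, x* maximizes the perturbed linear objective x ↦ ⟨θ̂, x⟩ over all of C. -/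
open Set

/-- robustness of the optimal arm over a compact convex set
with finitely many extreme points: if the gap at the extreme points is `Δ` and
all estimation errors at the extreme points are below `Δ/2`, then `x*`
maximizes the perturbed objective `x ↦ ⟨θ̂, x⟩` over all of `C`. -/
theorem perturbed_optimum_of_small_error
    {N : ℕ} (C : Set (Fin N → ℝ)) (hcomp : IsCompact C) (hconv : Convex ℝ C)
    (hne : C.Nonempty) (hfin : (C.extremePoints ℝ).Finite)
    (θ θhat : Fin N → ℝ) (xstar : Fin N → ℝ)
    (hx : xstar ∈ C.extremePoints ℝ) (Δ : ℝ) (hΔ : 0 < Δ)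
    (hgap : ∀ y ∈ C.extremePoints ℝ, y ≠ xstar →
      Δ ≤ (∑ i, θ i * xstar i) - ∑ i, θ i * y i)
    (herr : ∀ x ∈ C.extremePoints ℝ,
      |(∑ i, θhat i * x i) - ∑ i, θ i * x i| < Δ / 2) :
    ∀ y ∈ C, (∑ i, θhat i * y i) ≤ ∑ i, θhat i * xstar i := by
  -- every extreme point satisfies the bound
  have hext : ∀ z ∈ C.extremePoints ℝ, (∑ i, θhat i * z i) ≤ ∑ i, θhat i * xstar i := by
    intro z hz
    by_cases hzx : z = xstar
    · subst hzx; exact le_refl _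
    · have h1 := herr z hz
      have h2 := herr xstar hx
      have h3 := hgap z hz hzx
      have := abs_lt.1 h1
      have := abs_lt.1 h2
      linarith [ (abs_lt.1 h1).1, (abs_lt.1 h1).2, (abs_lt.1 h2).1, (abs_lt.1 h2).2 ]
  -- C equals convex hull of extreme points
  have hC : C = convexHull ℝ (C.extremePoints ℝ) := by
    have := closure_convexHull_extremePoints hcomp hconv
    conv_lhs => rw [← this]
    exact (hfin.isCompact_convexHull (𝕜 := ℝ)).isClosed.closure_eq
  intro y hy
  rw [hC] at hy
  -- the sublevel set is convex and contains the extreme points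
  have : y ∈ {x : Fin N → ℝ | (∑ i, θhat i * x i) ≤ ∑ i, θhat i * xstar i} := by
    refine convexHull_min ?_ ?_ hy
    · exact hext
    · intro a ha b hb s t hs ht hst
      simp only [mem_setOf_eq] at *
      have : (∑ i, θhat i * (s • a + t • b) i)
          = s * (∑ i, θhat i * a i) + t * (∑ i, θhat i * b i) := by
        simp only [Pi.add_apply, Pi.smul_apply, smul_eq_mul]
        rw [Finset.mul_sum, Finset.mul_sum, ← Finset.sum_add_distrib]
        congr 1; ext i; ring
      rw [this]
      calc s * (∑ i, θhat i * a i) + t * (∑ i, θhat i * b i)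
          ≤ s * (∑ i, θhat i * xstar i) + t * (∑ i, θhat i * xstar i) := by
            gcongr
        _ = ∑ i, θhat i * xstar i := by rw [← add_mul, hst, one_mul]
  exact this
end
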